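/- Let λ be a partition and suppose (r,c) is an addable corner of λ (λ_r = c − 1 and λ'_c = r − 1). Let λ̄ be λ with the cell (r,c) added. Then there is an equality of multisets of integers: hooks(λ̄) + {λ_i − c + r − i : 1 ≤ i ≤ r−1} + {λ'_j − r + c − j : 1 ≤ j ≤ c−1} = hooks(λ) + {λ_i − c + r − i + 1 : 1 ≤ i ≤ r−1} + {λ'_j − r + c − j + 1 : 1 ≤ j ≤ c−1} + {1}. -/

import Mathlib

/-- `f` encodes a partition `λ` via its parts `λ_i = f i` for `i ≥ 1` (and `f 0 = 0`):
the parts are weakly decreasing and eventually zero. -/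
def IsPartition (f : ℕ → ℕ) : Prop :=
  f 0 = 0 ∧ (∀ i, 1 ≤ i → f (i + 1) ≤ f i) ∧ ∃ N, ∀ i, N ≤ i → f i = 0

/-- The conjugate partition: `conjP f j = #{i ≥ 1 | f i ≥ j}`. -/
noncomputable def conjP (f : ℕ → ℕ) (j : ℕ) : ℕ :=
  Set.ncard {i : ℕ | 1 ≤ i ∧ j ≤ f i}

/-- The size `|λ| = Σ_i λ_i` of the partition. -/
noncomputable def wtP (f : ℕ → ℕ) : ℕ := ∑ᶠ i, f i

/-- `d_λ = Σ_i (λ'_i)² − Σ_i i·λ_i`. -/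
noncomputable def dP (f : ℕ → ℕ) : ℤ :=
  (∑ᶠ i : ℕ, (conjP f i : ℤ) ^ 2) - ∑ᶠ i : ℕ, (i : ℤ) * (f i : ℤ)

/-- The multiset of hook lengths of the partition: for each cell `(i,j)` of the Young
diagram (`1 ≤ i`, `1 ≤ j ≤ λ_i`) the hook length `λ_i − j + λ'_j − i + 1`. -/
noncomputable def hooksP (f : ℕ → ℕ) : Multiset ℤ :=
  (((Finset.Icc 1 (conjP f 1)) ×ˢ (Finset.Icc 1 (f 1))).filter
      (fun p => p.2 ≤ f p.1)).val.map
    (fun p => (f p.1 : ℤ) - (p.2 : ℤ) + (conjP f p.2 : ℤ) - (p.1 : ℤ) + 1)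

lemma part_anti {f : ℕ → ℕ} (hf : IsPartition f) :
    ∀ a b, 1 ≤ a → a ≤ b → f b ≤ f a := by
  intro a b ha hab
  induction b with
  | zero => omega
  | succ n ih =>
    rcases Nat.lt_or_ge a (n+1) with h | h
    · exact le_trans (hf.2.1 n (by omega)) (ih (by omega))
    · have : a = n + 1 := by omega
      simp [this]

lemma conj_iff {f : ℕ → ℕ} (hf : IsPartition f) {j : ℕ} (hj : 1 ≤ j)
    {i : ℕ} (hi : 1 ≤ i) : j ≤ f i ↔ i ≤ conjP f j := by
  obtain ⟨N, hN⟩ := hf.2.2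
  set S : Set ℕ := {i : ℕ | 1 ≤ i ∧ j ≤ f i} with hS
  have hfin : S.Finite := by
    apply Set.Finite.subset (Set.finite_Iio N)
    intro x hx
    by_contra hxn
    have : f x = 0 := hN x (by simpa using hxn)
    have := hx.2
    omega
  rcases Set.eq_empty_or_nonempty S with he | hne
  · have h0 : conjP f j = 0 := by
      rw [conjP, ← hS, he]; simp
    rw [h0]
    constructor
    · intro h
      exact absurd (by exact ⟨hi, h⟩ : i ∈ S) (by simp [he])
    · omega
  · have hne' : hfin.toFinset.Nonempty := by
      simpa [Set.Finite.toFinset_nonempty] using hne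
    set m := hfin.toFinset.max' hne' with hm
    have hmS : m ∈ S := by
      have := hfin.toFinset.max'_mem hne'
      simpa using this
    have hSeq : S = Set.Icc 1 m := by
      ext x
      constructor
      · intro hx
        exact ⟨hx.1, hfin.toFinset.le_max' x (by simpa using hx)⟩
      · intro hx
        exact ⟨hx.1, le_trans hmS.2 (part_anti hf x m hx.1 hx.2)⟩
    have hcard : conjP f j = m := by
      rw [conjP, ← hS, hSeq]
      rw [show Set.Icc 1 m = ↑(Finset.Icc 1 m) by simp, Set.ncard_coe_finset, Nat.card_Icc]
      omega
    rw [hcard]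
    constructor
    · intro h
      have : i ∈ S := ⟨hi, h⟩
      rw [hSeq] at this; exact this.2
    · intro h
      have : i ∈ S := by rw [hSeq]; exact ⟨hi, h⟩
      exact this.2

noncomputable def cellsF (f : ℕ → ℕ) : Finset (ℕ × ℕ) :=
  ((Finset.Icc 1 (conjP f 1)) ×ˢ (Finset.Icc 1 (f 1))).filter (fun p => p.2 ≤ f p.1)

lemma mem_cellsF {f : ℕ → ℕ} (hf : IsPartition f) (p : ℕ × ℕ) :
    p ∈ cellsF f ↔ 1 ≤ p.1 ∧ 1 ≤ p.2 ∧ p.2 ≤ f p.1 := by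
  simp only [cellsF, Finset.mem_filter, Finset.mem_product, Finset.mem_Icc]
  constructor
  · rintro ⟨⟨⟨h1, _⟩, ⟨h2, _⟩⟩, h3⟩
    exact ⟨h1, h2, h3⟩
  · rintro ⟨h1, h2, h3⟩
    have hf1 : 1 ≤ f p.1 := le_trans h2 h3
    have hc : p.1 ≤ conjP f 1 := (conj_iff hf le_rfl h1).mp hf1
    have hle : f p.1 ≤ f 1 := part_anti hf 1 p.1 le_rfl h1
    exact ⟨⟨⟨h1, hc⟩, ⟨h2, le_trans h3 hle⟩⟩, h3⟩

lemma hooksP_eq (f : ℕ → ℕ) :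
    hooksP f = (cellsF f).val.map
      (fun p => (f p.1 : ℤ) - (p.2 : ℤ) + (conjP f p.2 : ℤ) - (p.1 : ℤ) + 1) := rfl

lemma conjP_congr {f₁ f₂ : ℕ → ℕ} (j : ℕ)
    (h : ∀ i, 1 ≤ i → (j ≤ f₁ i ↔ j ≤ f₂ i)) : conjP f₁ j = conjP f₂ j := by
  unfold conjP
  congr 1
  ext i
  simp only [Set.mem_setOf_eq]
  constructor
  · rintro ⟨h1, h2⟩; exact ⟨h1, (h i h1).mp h2⟩
  · rintro ⟨h1, h2⟩; exact ⟨h1, (h i h1).mpr h2⟩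

/-- If `(r,c)` is an addable corner of the partition `λ` and `λ̄` is
`λ` with the cell `(r,c)` added, then the multisets of hook lengths satisfy:
`hooks(λ̄) + {λ_i − c + r − i : 1 ≤ i ≤ r−1} + {λ'_j − r + c − j : 1 ≤ j ≤ c−1}
  = hooks(λ) + {λ_i − c + r − i + 1 : 1 ≤ i ≤ r−1} + {λ'_j − r + c − j + 1 : 1 ≤ j ≤ c−1} + {1}`. -/
theorem hooks_add_corner
    (f : ℕ → ℕ) (hf : IsPartition f) (r c : ℕ) (hr : 1 ≤ r) (hc : 1 ≤ c)
    (hfr : f r = c - 1) (hfc : conjP f c = r - 1)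
    (g : ℕ → ℕ) (hg : ∀ i, g i = if i = r then f i + 1 else f i) :
    hooksP g
        + (Finset.Icc 1 (r - 1)).val.map
            (fun i => (f i : ℤ) - (c : ℤ) + (r : ℤ) - (i : ℤ))
        + (Finset.Icc 1 (c - 1)).val.map
            (fun j => (conjP f j : ℤ) - (r : ℤ) + (c : ℤ) - (j : ℤ)) =
      hooksP f
        + (Finset.Icc 1 (r - 1)).val.map
            (fun i => (f i : ℤ) - (c : ℤ) + (r : ℤ) - (i : ℤ) + 1)
        + (Finset.Icc 1 (c - 1)).val.map
            (fun j => (conjP f j : ℤ) - (r : ℤ) + (c : ℤ) - (j : ℤ) + 1)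
        + {(1 : ℤ)} := by
  classical
  -- basic facts about g
  have hgr : g r = c := by rw [hg]; simp; omega
  have hgi : ∀ i, i ≠ r → g i = f i := by intro i h; rw [hg, if_neg h]
  have hgpart : IsPartition g := by
    refine ⟨by rw [hgi 0 (by omega)]; exact hf.1, ?_, ?_⟩
    · intro i hi
      rcases eq_or_ne (i + 1) r with h | h
      · rw [h, hgr, hgi i (by omega)]
        exact (conj_iff hf hc hi).mpr (by omega)
      · rcases eq_or_ne i r with h' | h'
        · rw [hgi _ h, h', hgr]
          have := hf.2.1 r hr
          omega
        · rw [hgi _ h, hgi _ h']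
          exact hf.2.1 i hi
    · obtain ⟨N, hN⟩ := hf.2.2
      exact ⟨max N (r + 1), fun i hi => by
        rw [hgi i (by omega)]; exact hN i (by omega)⟩
  have hconjg_ne : ∀ j, 1 ≤ j → j ≠ c → conjP g j = conjP f j := by
    intro j hj hjc
    apply conjP_congr
    intro i hi
    rcases eq_or_ne i r with h | h
    · subst h; rw [hgr, hfr]; omega
    · rw [hgi i h]
  have hconjgc : conjP g c = r := by
    have h1 : r ≤ conjP g c := (conj_iff hgpart hc hr).mp (by rw [hgr])
    have h2 : ¬ (r + 1 ≤ conjP g c) := by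
      intro h
      have := (conj_iff hgpart hc (by omega)).mpr h
      rw [hgi (r+1) (by omega)] at this
      have := hf.2.1 r hr
      omega
    omega
  -- cells of g
  have hnotmem : (r, c) ∉ cellsF f := by
    rw [mem_cellsF hf]
    simp only [not_and]
    intro _ _
    omega
  have hcells : cellsF g = insert (r, c) (cellsF f) := by
    ext ⟨i, j⟩
    rw [mem_cellsF hgpart, Finset.mem_insert, mem_cellsF hf]
    rcases eq_or_ne i r with h | h
    · subst h
      rw [hgr, hfr]
      simp only [Prod.mk.injEq, true_and]
      omega
    · rw [hgi i h]
      simp only [Prod.mk.injEq]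
      constructor
      · intro hh; exact Or.inr hh
      · rintro (⟨h1, h2⟩ | hh)
        · exact absurd h1 h
        · exact hh
  -- row and column finsets
  have hrowF : (cellsF f).filter (fun p => p.1 = r)
      = (Finset.Icc 1 (c - 1)).map ⟨fun j => (r, j), fun a b hab => by simpa using hab⟩ := by
    ext ⟨i, j⟩
    simp only [Finset.mem_filter, mem_cellsF hf, Finset.mem_map, Finset.mem_Icc,
      Function.Embedding.coeFn_mk, Prod.mk.injEq]
    constructor
    · rintro ⟨⟨h1, h2, h3⟩, h4⟩
      subst h4
      rw [hfr] at h3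
      exact ⟨j, ⟨h2, h3⟩, rfl⟩
    · rintro ⟨a, ⟨ha1, ha2⟩, h56⟩
      obtain ⟨h5, h6⟩ := Prod.mk.inj (show (r, a) = (i, j) from h56)
      subst h5; subst h6
      rw [hfr]
      exact ⟨⟨hr, ha1, ha2⟩, rfl⟩
  have hcolF : (cellsF f).filter (fun p => ¬ p.1 = r ∧ p.2 = c)
      = (Finset.Icc 1 (r - 1)).map ⟨fun i => (i, c), fun a b hab => by simpa using hab⟩ := by
    ext ⟨i, j⟩
    simp only [Finset.mem_filter, mem_cellsF hf, Finset.mem_map, Finset.mem_Icc,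
      Function.Embedding.coeFn_mk, Prod.mk.injEq]
    constructor
    · rintro ⟨⟨h1, h2, h3⟩, h4, h5⟩
      rw [h5] at h3
      have h6 : i ≤ conjP f c := (conj_iff hf hc h1).mp h3
      exact ⟨i, ⟨h1, by omega⟩, by rw [h5]; rfl⟩
    · rintro ⟨a, ⟨ha1, ha2⟩, h56⟩
      obtain ⟨h5, h6⟩ := Prod.mk.inj (show (a, c) = (i, j) from h56)
      subst h5
      have h7 : c ≤ f a := (conj_iff hf hc ha1).mpr (by omega)
      rw [← h6]
      exact ⟨⟨ha1, hc, h7⟩, by omega, rfl⟩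
  -- set up hook functions and multiset split
  set hF : ℕ × ℕ → ℤ :=
    fun p => (f p.1 : ℤ) - (p.2 : ℤ) + (conjP f p.2 : ℤ) - (p.1 : ℤ) + 1 with hFdef
  set hG : ℕ × ℕ → ℤ :=
    fun p => (g p.1 : ℤ) - (p.2 : ℤ) + (conjP g p.2 : ℤ) - (p.1 : ℤ) + 1 with hGdef
  set M : Multiset (ℕ × ℕ) := (cellsF f).val with hMdef
  have hMsplit : M = M.filter (fun p => p.1 = r)
      + (M.filter (fun p => ¬ p.1 = r)).filter (fun p => p.2 = c)
      + (M.filter (fun p => ¬ p.1 = r)).filter (fun p => ¬ p.2 = c) := by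
    conv_lhs => rw [← Multiset.filter_add_not (fun p : ℕ × ℕ => p.1 = r) M,
      ← Multiset.filter_add_not (fun p : ℕ × ℕ => p.2 = c)
        (M.filter (fun p => ¬ p.1 = r))]
    rw [add_assoc]
  -- the four maps over row/column cells
  have hrowM : M.filter (fun p => p.1 = r)
      = (Finset.Icc 1 (c - 1)).val.map (fun j => (r, j)) := by
    rw [hMdef, ← Finset.filter_val, hrowF, Finset.map_val]
    rfl
  have hcolM : (M.filter (fun p => ¬ p.1 = r)).filter (fun p => p.2 = c)
      = (Finset.Icc 1 (r - 1)).val.map (fun i => (i, c)) := by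
    rw [hMdef, ← Finset.filter_val, ← Finset.filter_val, Finset.filter_filter, hcolF,
      Finset.map_val]
    rfl
  have hFrow : (M.filter (fun p => p.1 = r)).map hF
      = (Finset.Icc 1 (c - 1)).val.map
          (fun j => (conjP f j : ℤ) - (r : ℤ) + (c : ℤ) - (j : ℤ)) := by
    rw [hrowM, Multiset.map_map]
    apply Multiset.map_congr rfl
    intro j hj
    simp only [Function.comp, hFdef, hfr]
    have : ((c - 1 : ℕ) : ℤ) = (c : ℤ) - 1 := by omega
    rw [this]; ring
  have hGrow : (M.filter (fun p => p.1 = r)).map hG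
      = (Finset.Icc 1 (c - 1)).val.map
          (fun j => (conjP f j : ℤ) - (r : ℤ) + (c : ℤ) - (j : ℤ) + 1) := by
    rw [hrowM, Multiset.map_map]
    apply Multiset.map_congr rfl
    intro j hj
    rw [Finset.mem_val, Finset.mem_Icc] at hj
    simp only [Function.comp, hGdef, hgr]
    rw [hconjg_ne j hj.1 (by omega)]
    ring
  have hFcol : ((M.filter (fun p => ¬ p.1 = r)).filter (fun p => p.2 = c)).map hF
      = (Finset.Icc 1 (r - 1)).val.map
          (fun i => (f i : ℤ) - (c : ℤ) + (r : ℤ) - (i : ℤ)) := by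
    rw [hcolM, Multiset.map_map]
    apply Multiset.map_congr rfl
    intro i hi
    simp only [Function.comp, hFdef, hfc]
    have : ((r - 1 : ℕ) : ℤ) = (r : ℤ) - 1 := by omega
    rw [this]; ring
  have hGcol : ((M.filter (fun p => ¬ p.1 = r)).filter (fun p => p.2 = c)).map hG
      = (Finset.Icc 1 (r - 1)).val.map
          (fun i => (f i : ℤ) - (c : ℤ) + (r : ℤ) - (i : ℤ) + 1) := by
    rw [hcolM, Multiset.map_map]
    apply Multiset.map_congr rfl
    intro i hi
    rw [Finset.mem_val, Finset.mem_Icc] at hi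
    simp only [Function.comp, hGdef, hconjgc]
    rw [hgi i (by omega)]
  have hrest : ((M.filter (fun p => ¬ p.1 = r)).filter (fun p => ¬ p.2 = c)).map hG
      = ((M.filter (fun p => ¬ p.1 = r)).filter (fun p => ¬ p.2 = c)).map hF := by
    apply Multiset.map_congr rfl
    intro p hp
    rw [Multiset.mem_filter] at hp
    obtain ⟨hp1, hp2⟩ := hp
    rw [Multiset.mem_filter] at hp1
    obtain ⟨hpM, hp3⟩ := hp1
    have hpc : p ∈ cellsF f := hpM
    rw [mem_cellsF hf] at hpc
    simp only [hGdef, hFdef, hgi p.1 hp3, hconjg_ne p.2 hpc.2.1 hp2]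
  -- expressing the two hook multisets
  have hhf : hooksP f
      = (Finset.Icc 1 (c - 1)).val.map
          (fun j => (conjP f j : ℤ) - (r : ℤ) + (c : ℤ) - (j : ℤ))
      + (Finset.Icc 1 (r - 1)).val.map
          (fun i => (f i : ℤ) - (c : ℤ) + (r : ℤ) - (i : ℤ))
      + ((M.filter (fun p => ¬ p.1 = r)).filter (fun p => ¬ p.2 = c)).map hF := by
    rw [hooksP_eq f, ← hFdef, ← hMdef]
    conv_lhs => rw [hMsplit]
    rw [Multiset.map_add, Multiset.map_add, hFrow, hFcol]
  have hhg : hooksP g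
      = 1 ::ₘ ((Finset.Icc 1 (c - 1)).val.map
          (fun j => (conjP f j : ℤ) - (r : ℤ) + (c : ℤ) - (j : ℤ) + 1)
      + (Finset.Icc 1 (r - 1)).val.map
          (fun i => (f i : ℤ) - (c : ℤ) + (r : ℤ) - (i : ℤ) + 1)
      + ((M.filter (fun p => ¬ p.1 = r)).filter (fun p => ¬ p.2 = c)).map hF) := by
    rw [hooksP_eq g, ← hGdef, hcells, Finset.insert_val_of_notMem hnotmem, ← hMdef,
      Multiset.map_cons]
    have h1 : hG (r, c) = 1 := by
      simp only [hGdef, hgr, hconjgc]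
      ring
    rw [h1]
    congr 1
    conv_lhs => rw [hMsplit]
    rw [Multiset.map_add, Multiset.map_add, hGrow, hGcol, hrest]
  rw [hhf, hhg, ← Multiset.singleton_add]
  abel
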